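/- Let ζ ∈ (0,1), s = √(1−ζ²), and u*(x,t) = 4·arctan( (1/ζ)·sinh(ζ·t/s) / cosh(x/s) ). With F(u) = 1 − cos(u), the initial energy over ℝ satisfies ∫_ℝ [ (1/2)(∂ₜu*(x,0))² + (1/2)(∂ₓu*(x,0))² + F(u*(x,0)) ] dx = 16/√(1−ζ²). -/

import Mathlib

open Real Filter MeasureTheory

lemma myHasDerivAt_tanh (x : ℝ) : HasDerivAt Real.tanh (1 / Real.cosh x ^ 2) x := by
  have h : Real.tanh = fun y => Real.sinh y / Real.cosh y :=
    funext fun y => Real.tanh_eq_sinh_div_cosh y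
  rw [h]
  have hd := (Real.hasDerivAt_sinh x).div (Real.hasDerivAt_cosh x) (Real.cosh_pos x).ne'
  refine hd.congr_deriv ?_
  have := Real.cosh_sq_sub_sinh_sq x
  field_simp
  nlinarith [this]

lemma myTanh_eq (x : ℝ) : Real.tanh x = 1 - 2 / (Real.exp (2 * x) + 1) := by
  have h1 : (0:ℝ) < Real.exp x := Real.exp_pos x
  have h2 : Real.exp (2 * x) = Real.exp x * Real.exp x := by
    rw [two_mul, Real.exp_add]
  rw [Real.tanh_eq_sinh_div_cosh, Real.sinh_eq, Real.cosh_eq, Real.exp_neg, h2]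
  have h3 : (0:ℝ) < Real.exp x * Real.exp x + 1 := by positivity
  field_simp
  ring

lemma myTendsto_tanh_atTop : Tendsto Real.tanh atTop (nhds 1) := by
  have h1 : Tendsto (fun x : ℝ => Real.exp (2 * x) + 1) atTop atTop := by
    apply tendsto_atTop_add_const_right
    exact Real.tendsto_exp_atTop.comp (tendsto_id.const_mul_atTop two_pos)
  have h2 : Tendsto (fun x : ℝ => 2 / (Real.exp (2 * x) + 1)) atTop (nhds 0) :=
    Tendsto.div_atTop tendsto_const_nhds h1
  have h3 : Tendsto (fun x : ℝ => 1 - 2 / (Real.exp (2 * x) + 1)) atTop (nhds (1 - 0)) :=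
    tendsto_const_nhds.sub h2
  simp only [sub_zero] at h3
  exact h3.congr (fun x => (myTanh_eq x).symm)

lemma myTendsto_tanh_atBot : Tendsto Real.tanh atBot (nhds (-1)) := by
  have h := (myTendsto_tanh_atTop.comp tendsto_neg_atBot_atTop).neg
  simp only [Function.comp] at h
  exact h.congr fun x => by rw [← Real.tanh_neg, neg_neg]

lemma mySq_le_sinh_sq (x : ℝ) : x ^ 2 ≤ Real.sinh x ^ 2 := by
  rcases le_or_gt 0 x with hx | hx
  · have h := Real.self_le_sinh_iff.mpr hx
    nlinarith
  · have h := Real.self_le_sinh_iff.mpr (neg_nonneg.mpr hx.le)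
    rw [Real.sinh_neg] at h
    nlinarith

theorem uStar_sineGordon_initial_energy
    (ζ : ℝ) (hζ : ζ ∈ Set.Ioo (0:ℝ) 1)
    (s : ℝ) (hs : s = Real.sqrt (1 - ζ ^ 2))
    (u : ℝ → ℝ → ℝ)
    (hu : ∀ x t : ℝ,
      u x t = 4 * Real.arctan ((1 / ζ) * Real.sinh (ζ * t / s) / Real.cosh (x / s)))
    (F : ℝ → ℝ) (hF : ∀ r : ℝ, F r = 1 - Real.cos r) :
    (∫ x : ℝ,
      (((1:ℝ)/2) * (deriv (fun t => u x t) 0) ^ 2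
        + ((1:ℝ)/2) * (deriv (fun y => u y 0) x) ^ 2
        + F (u x 0)))
    = 16 / Real.sqrt (1 - ζ ^ 2) := by
  obtain ⟨hζ0, hζ1⟩ := hζ
  have h1 : (0:ℝ) < 1 - ζ ^ 2 := by nlinarith
  have hspos : 0 < s := hs ▸ Real.sqrt_pos.mpr h1
  have hs2 : s ^ 2 = 1 - ζ ^ 2 := by rw [hs]; exact Real.sq_sqrt h1.le
  have hsle1 : s ≤ 1 := by nlinarith
  -- the time derivative at t = 0
  have hdt : ∀ x : ℝ, deriv (fun t => u x t) 0 = 4 / (s * Real.cosh (x / s)) := by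
    intro x
    have hlin : HasDerivAt (fun t : ℝ => ζ * t / s) (ζ / s) 0 := by
      simpa using ((hasDerivAt_id (0:ℝ)).const_mul ζ).div_const s
    have hsinh : HasDerivAt (fun t : ℝ => Real.sinh (ζ * t / s))
        (Real.cosh (ζ * 0 / s) * (ζ / s)) 0 :=
      hlin.sinh
    have hinner : HasDerivAt
        (fun t : ℝ => (1 / ζ) * Real.sinh (ζ * t / s) / Real.cosh (x / s))
        ((1 / ζ) * (Real.cosh (ζ * 0 / s) * (ζ / s)) / Real.cosh (x / s)) 0 :=
      (hsinh.const_mul (1 / ζ)).div_const (Real.cosh (x / s))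
    have hval : (1 / ζ) * Real.sinh (ζ * 0 / s) / Real.cosh (x / s) = 0 := by
      simp
    have harctan : HasDerivAt
        (fun t : ℝ => Real.arctan ((1 / ζ) * Real.sinh (ζ * t / s) / Real.cosh (x / s)))
        ((1 / (1 + ((1 / ζ) * Real.sinh (ζ * 0 / s) / Real.cosh (x / s)) ^ 2))
          * ((1 / ζ) * (Real.cosh (ζ * 0 / s) * (ζ / s)) / Real.cosh (x / s))) 0 :=
      (Real.hasDerivAt_arctan _).comp 0 hinner
    have hmain : HasDerivAt (fun t => u x t) (4 / (s * Real.cosh (x / s))) 0 := by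
      have h4 := harctan.const_mul 4
      have heq : (fun t : ℝ =>
          4 * Real.arctan ((1 / ζ) * Real.sinh (ζ * t / s) / Real.cosh (x / s)))
          = fun t => u x t := by
        funext t; rw [hu]
      rw [heq] at h4
      refine h4.congr_deriv ?_
      rw [hval]
      have hcosh : (0:ℝ) < Real.cosh (x / s) := Real.cosh_pos _
      simp only [mul_zero, zero_div, Real.cosh_zero]
      field_simp
      norm_num
    exact hmain.deriv
  -- the space derivative at t = 0 is zero
  have hdx : ∀ x : ℝ, deriv (fun y => u y 0) x = 0 := by
    intro x
    have : (fun y => u y 0) = fun _ : ℝ => 4 * Real.arctan 0 := by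
      funext y; rw [hu]; simp
    rw [this, deriv_const]
  -- u x 0 = 0
  have hu0 : ∀ x : ℝ, u x 0 = 0 := by
    intro x; rw [hu]; simp
  -- rewrite the integrand
  have hintegrand : ∀ x : ℝ,
      ((1:ℝ)/2) * (deriv (fun t => u x t) 0) ^ 2
        + ((1:ℝ)/2) * (deriv (fun y => u y 0) x) ^ 2 + F (u x 0)
      = (8 / s) * (1 / Real.cosh (x / s) ^ 2 * (1 / s)) := by
    intro x
    rw [hdt x, hdx x, hu0 x, hF]
    have hcosh : (0:ℝ) < Real.cosh (x / s) := Real.cosh_pos _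
    simp only [Real.cos_zero]
    field_simp
    ring
  -- FTC setup
  set f : ℝ → ℝ := fun x => Real.tanh (x / s) with hf
  set g : ℝ → ℝ := fun x => 1 / Real.cosh (x / s) ^ 2 * (1 / s) with hg
  have hderiv : ∀ x : ℝ, HasDerivAt f (g x) x := by
    intro x
    have hl : HasDerivAt (fun y : ℝ => y / s) (1 / s) x := by
      simpa using (hasDerivAt_id x).div_const s
    have := (myHasDerivAt_tanh (x / s)).comp x hl
    exact this
  have hbound : ∀ x : ℝ, g x ≤ (1 / s) * (1 + x ^ 2)⁻¹ := by
    intro x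
    have hc : 1 + x ^ 2 ≤ Real.cosh (x / s) ^ 2 := by
      have h1' : Real.cosh (x / s) ^ 2 = 1 + Real.sinh (x / s) ^ 2 := by
        nlinarith [Real.cosh_sq_sub_sinh_sq (x / s)]
      have h2' : (x / s) ^ 2 ≤ Real.sinh (x / s) ^ 2 := mySq_le_sinh_sq _
      have h3' : x ^ 2 ≤ (x / s) ^ 2 := by
        rw [div_pow]
        rw [le_div_iff₀ (by positivity)]
        nlinarith [sq_nonneg x]
      linarith
    have hc0 : (0:ℝ) < 1 + x ^ 2 := by positivity
    have hcosh : (0:ℝ) < Real.cosh (x / s) ^ 2 := by positivity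
    have hkey : 1 / Real.cosh (x / s) ^ 2 ≤ (1 + x ^ 2)⁻¹ := by
      rw [one_div]
      exact inv_anti₀ hc0 hc
    calc g x = (1 / s) * (1 / Real.cosh (x / s) ^ 2) := by rw [hg]; ring
      _ ≤ (1 / s) * (1 + x ^ 2)⁻¹ :=
        mul_le_mul_of_nonneg_left hkey (by positivity)
  have hgnonneg : ∀ x : ℝ, 0 ≤ g x := by
    intro x
    have : (0:ℝ) < Real.cosh (x / s) ^ 2 := by positivity
    rw [hg]; positivity
  have hgcont : Continuous g := by
    apply Continuous.mul _ continuous_const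
    apply Continuous.div continuous_const
    · exact (Real.continuous_cosh.comp (continuous_id.div_const s)).pow 2
    · intro x
      exact (pow_pos (Real.cosh_pos _) 2).ne'
  have hgint : Integrable g := by
    apply Integrable.mono' (integrable_inv_one_add_sq.const_mul (1 / s))
      hgcont.aestronglyMeasurable
    filter_upwards with x
    rw [Real.norm_eq_abs, abs_of_nonneg (hgnonneg x)]
    exact hbound x
  have htop : Tendsto f atTop (nhds 1) := by
    apply myTendsto_tanh_atTop.comp
    exact (tendsto_id.atTop_div_const hspos)
  have hbot : Tendsto f atBot (nhds (-1)) := by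
    apply myTendsto_tanh_atBot.comp
    exact (tendsto_id.atBot_div_const hspos)
  have hFTC : ∫ x : ℝ, g x = 1 - (-1) :=
    MeasureTheory.integral_of_hasDerivAt_of_tendsto hderiv hgint hbot htop
  calc (∫ x : ℝ,
      (((1:ℝ)/2) * (deriv (fun t => u x t) 0) ^ 2
        + ((1:ℝ)/2) * (deriv (fun y => u y 0) x) ^ 2
        + F (u x 0)))
      = ∫ x : ℝ, (8 / s) * g x := by
        apply integral_congr_ae
        filter_upwards with x
        exact hintegrand x
    _ = (8 / s) * ∫ x : ℝ, g x := MeasureTheory.integral_const_mul _ _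
    _ = (8 / s) * 2 := by rw [hFTC]; norm_num
    _ = 16 / Real.sqrt (1 - ζ ^ 2) := by rw [← hs]; field_simp; ring
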